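/- Let θ₀ and θ₁ be commuting involutions of a compact semisimple Lie algebra g with canonical decompositions g = kᵢ ⊕ pᵢ, and let a be a maximal abelian subspace of p₀ ∩ p₁. If a₀ is a maximal abelian subspace of p₀ containing a, then a₀ is invariant under θ₁. -/

import Mathlib

/-- Let `θ₀` and `θ₁` be commuting involutions of a compact semisimple
Lie algebra `g` with canonical decompositions `g = kᵢ ⊕ pᵢ` (`pᵢ = {X | θᵢX = -X}`), and
let `a` be a maximal abelian subspace of `p₀ ∩ p₁`.  If `a₀` is a maximal abelian subspace
of `p₀` containing `a`, then `a₀` is invariant under `θ₁`. -/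
theorem stmt11
    (g : Type*) [LieRing g] [LieAlgebra ℝ g] [Module.Finite ℝ g]
    [LieAlgebra.IsSemisimple ℝ g]
    (θ₀ θ₁ : g →ₗ⁅ℝ⁆ g)
    (hθ₀ : ∀ X : g, θ₀ (θ₀ X) = X) (hθ₁ : ∀ X : g, θ₁ (θ₁ X) = X)
    (hcomm : ∀ X : g, θ₀ (θ₁ X) = θ₁ (θ₀ X))
    (a : Submodule ℝ g)
    (hap : ∀ v ∈ a, θ₀ v = -v ∧ θ₁ v = -v)
    (habelian : ∀ u ∈ a, ∀ v ∈ a, ⁅u, v⁆ = 0)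
    (hamax : ∀ v : g, θ₀ v = -v → θ₁ v = -v → (∀ u ∈ a, ⁅u, v⁆ = 0) → v ∈ a)
    (a₀ : Submodule ℝ g) (haa₀ : a ≤ a₀)
    (ha₀p : ∀ v ∈ a₀, θ₀ v = -v)
    (ha₀abelian : ∀ u ∈ a₀, ∀ v ∈ a₀, ⁅u, v⁆ = 0)
    (ha₀max : ∀ v : g, θ₀ v = -v → (∀ u ∈ a₀, ⁅u, v⁆ = 0) → v ∈ a₀) :
    ∀ H ∈ a₀, θ₁ H ∈ a₀ := by
  intro H hH
  have hinj : ∀ x : g, θ₁ x = 0 → x = 0 := by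
    intro x hx
    have h := hθ₁ x
    rw [hx, map_zero] at h
    exact h.symm
  have key : ∀ X ∈ a, ⁅X, θ₁ H⁆ = 0 := by
    intro X hX
    apply hinj
    rw [LieHom.map_lie, hθ₁, (hap X hX).2, neg_lie,
      ha₀abelian X (haa₀ hX) H hH, neg_zero]
  set H₁ := (1/2 : ℝ) • (H - θ₁ H) with hH₁def
  have hθ₀H : θ₀ H = -H := ha₀p H hH
  have h1 : θ₁ H₁ = -H₁ := by
    rw [hH₁def, map_smul, map_sub, hθ₁]
    module
  have h0 : θ₀ H₁ = -H₁ := by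
    rw [hH₁def, map_smul, map_sub, hcomm, hθ₀H, map_neg]
    module
  have hbr : ∀ u ∈ a, ⁅u, H₁⁆ = 0 := by
    intro u hu
    rw [hH₁def, lie_smul, lie_sub, ha₀abelian u (haa₀ hu) H hH, key u hu,
      sub_zero, smul_zero]
  have hmem : H₁ ∈ a := hamax H₁ h0 h1 hbr
  have heq : θ₁ H = H - (2:ℝ) • H₁ := by
    rw [hH₁def]
    module
  rw [heq]
  exact Submodule.sub_mem _ hH (Submodule.smul_mem _ _ (haa₀ hmem))
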